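/- Decidability of ℜ: there exists a computable function f : 𝓛 → Bool (with respect to an encoding of formulas of 𝓛 as natural numbers) such that for every formula φ, f φ = true if and only if ⊢_ℜ φ. -/

import Mathlib

/-- Formulas of the modal language 𝓛: propositional variables, ⊥, →, and ▷. -/
inductive Formula : Type
  | var : ℕ → Formula
  | bot : Formula
  | imp : Formula → Formula → Formula
  | tri : Formula → Formula → Formula
deriving DecidableEq

namespace Formula

/-- ¬φ := φ → ⊥ -/
def neg (φ : Formula) : Formula := imp φ bot
/-- ⊤ := ¬⊥ -/
def top : Formula := neg bot
/-- φ ∨ ψ := ¬φ → ψ -/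
def disj (φ ψ : Formula) : Formula := imp (neg φ) ψ
/-- φ ∧ ψ := ¬(φ → ¬ψ) -/
def conj (φ ψ : Formula) : Formula := neg (imp φ (neg ψ))

/-- `φ` is a substitution instance of a classical propositional tautology:
it evaluates to `true` under every boolean valuation of formulas that
respects `⊥` and `→` (variables and `▷`-formulas are treated as atoms). -/
def IsPropTaut (φ : Formula) : Prop :=
  ∀ v : Formula → Bool, v bot = false →
    (∀ a b, v (imp a b) = (!(v a) || v b)) → v φ = true

/-- Hilbert-style provability.  `Prv false` is the logic ℜ (axioms: classical
tautologies, A1, A2, A3; rules: Modus Ponens and monotonicity M);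
`Prv true` is the logic ℜ_d, which additionally has axiom A4. -/
inductive Prv : Bool → Formula → Prop
  | taut {d : Bool} {φ} : IsPropTaut φ → Prv d φ
  | a1 {d : Bool} (φ ψ χ) : Prv d (imp (tri φ ψ) (imp (tri χ ψ) (tri (disj φ χ) ψ)))
  | a2 {d : Bool} (φ) : Prv d (tri bot φ)
  | a3 {d : Bool} (φ) : Prv d (tri φ top)
  | a4 (φ ψ χ) : Prv true (imp (tri φ ψ) (imp (tri φ χ) (tri φ (conj ψ χ))))
  | mp {d : Bool} {φ ψ} : Prv d (imp φ ψ) → Prv d φ → Prv d ψ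
  | mono {d : Bool} {φ₁ φ₂ ψ₁ ψ₂} : Prv d (imp φ₁ φ₂) → Prv d (imp ψ₁ ψ₂) →
      Prv d (imp (tri φ₂ ψ₁) (tri φ₁ ψ₂))

/-- `Deriv d Δ φ`: φ is derivable from the hypotheses Δ together with all
theorems of the logic (`Prv d`) using only Modus Ponens. -/
inductive Deriv (d : Bool) (Δ : Set Formula) : Formula → Prop
  | hyp {φ} : φ ∈ Δ → Deriv d Δ φ
  | thm {φ} : Prv d φ → Deriv d Δ φ
  | mp {φ ψ} : Deriv d Δ (imp φ ψ) → Deriv d Δ φ → Deriv d Δ ψ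

/-- Conjunction of a list of formulas (empty conjunction is ⊤). -/
def conjList : List Formula → Formula
  | [] => top
  | φ :: l => conj φ (conjList l)

/-- ⋀Γ : conjunction of all formulas of a finite set Γ (⋀∅ = ⊤). -/
noncomputable def bigConj (Γ : Finset Formula) : Formula := conjList Γ.toList

/-- A set of formulas is consistent if ⊥ is not derivable from it. -/
def Consistent (d : Bool) (Δ : Set Formula) : Prop := ¬ Deriv d Δ bot

/-- The pair (u,v) is w-consistent: w ⊬ ⋀u ▷ ¬⋀v. -/
def WCons (d : Bool) (w : Set Formula) (u v : Finset Formula) : Prop :=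
  ¬ Deriv d w (tri (bigConj u) (neg (bigConj v)))

/-- The operation ∼: ∼(¬φ) = φ, and ∼φ = ¬φ if φ is not a negation. -/
def simNeg : Formula → Formula
  | imp φ bot => φ
  | φ => neg φ

/-- Φ is closed under subformulas. -/
def SubClosed (Φ : Finset Formula) : Prop :=
  (∀ a b, imp a b ∈ Φ → a ∈ Φ ∧ b ∈ Φ) ∧ (∀ a b, tri a b ∈ Φ → a ∈ Φ ∧ b ∈ Φ)

/-- Φ is closed under the operation ∼. -/
def SimClosed (Φ : Finset Formula) : Prop := ∀ φ ∈ Φ, simNeg φ ∈ Φ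

/-- w is a maximal consistent subset of Φ: w ⊆ Φ, w is consistent, and for
every φ ∈ Φ either φ ∈ w or ∼φ ∈ w. -/
def MaxCons (d : Bool) (Φ : Finset Formula) (w : Finset Formula) : Prop :=
  w ⊆ Φ ∧ Consistent d ↑w ∧ ∀ φ ∈ Φ, φ ∈ w ∨ simNeg φ ∈ w

/-- Kripke forcing: `rel w u v` means u →_w v, `val w p` means w ⊩ p. -/
def Forces {W : Type*} (rel : W → W → W → Prop) (val : W → ℕ → Prop) :
    W → Formula → Prop
  | w, var p => val w p
  | _, bot => False
  | w, imp a b => Forces rel val w a → Forces rel val w b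
  | w, tri a b => ∀ u v, rel w u v → Forces rel val u a →
      ∃ v', rel w u v' ∧ Forces rel val v' b

end Formula

/-- A Kripke model: a finite set of worlds, a ternary computability relation,
and a forcing relation between worlds and propositional variables. -/
structure KripkeModel where
  W : Type
  fin : Finite W
  rel : W → W → W → Prop
  val : W → ℕ → Prop

/-- A Kripke model is deterministic if for all worlds w, u there is at most
one v with u →_w v. -/
def KripkeModel.Deterministic (M : KripkeModel) : Prop :=
  ∀ w u v v', M.rel w u v → M.rel w u v' → v = v'

/-- Forcing in a Kripke model. -/
def KripkeModel.Forces (M : KripkeModel) : M.W → Formula → Prop :=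
  Formula.Forces M.rel M.val

/-- The standard enumeration of nondeterministic partial recursive functions:
ζ_w(u) = the set of possible outputs of machine (code) w on input u. -/
def zeta (w u : ℕ) : Set ℕ :=
  {v | ((Denumerable.ofNat Nat.Partrec.Code w).eval (Nat.pair u v)).Dom}

/-- The standard enumeration of deterministic partial recursive functions:
ξ_w(u) = the value of the partial recursive function with code w on input u. -/
def xi (w u : ℕ) : Part ℕ :=
  (Denumerable.ofNat Nat.Partrec.Code w).eval u

namespace Formula

/-- Set semantics for nondeterministic partial recursive functions
(existential reading of ▷). -/
def semN (val : ℕ → Set ℕ) : Formula → Set ℕ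
  | var p => val p
  | bot => ∅
  | imp a b => (Set.univ \ semN val a) ∪ semN val b
  | tri a b => {w | ∀ u ∈ semN val a, zeta w u ≠ ∅ → zeta w u ∩ semN val b ≠ ∅}

/-- Set semantics for deterministic partial recursive functions. -/
def semD (val : ℕ → Set ℕ) : Formula → Set ℕ
  | var p => val p
  | bot => ∅
  | imp a b => (Set.univ \ semD val a) ∪ semD val b
  | tri a b => {w | ∀ u ∈ semD val a, ∀ h : (xi w u).Dom, (xi w u).get h ∈ semD val b}

/-- Universal set semantics for nondeterministic partial recursive functions:
every terminating computation path from φ* ends in ψ*. -/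
def semU (val : ℕ → Set ℕ) : Formula → Set ℕ
  | var p => val p
  | bot => ∅
  | imp a b => (Set.univ \ semU val a) ∪ semU val b
  | tri a b => {w | ∀ u ∈ semU val a, zeta w u ⊆ semU val b}

/-- A canonical injective encoding of formulas as natural numbers. -/
def enc : Formula → ℕ
  | var n => 4 * n
  | bot => 1
  | imp a b => 4 * Nat.pair (enc a) (enc b) + 2
  | tri a b => 4 * Nat.pair (enc a) (enc b) + 3

end Formula

namespace DecR
open Formula

/-! ### Propositional toolkit -/

theorem wmp {d X p q} (h1 : Prv d (imp X (imp p q))) (h2 : Prv d (imp X p)) :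
    Prv d (imp X q) := by
  have frege : Prv d (imp (imp X (imp p q)) (imp (imp X p) (imp X q))) := by
    apply Prv.taut; intro v hb hi
    simp only [hi]; cases v X <;> cases v p <;> cases v q <;> rfl
  exact (frege.mp h1).mp h2

theorem wthm {d X q} (h : Prv d q) : Prv d (imp X q) := by
  have : Prv d (imp q (imp X q)) := by
    apply Prv.taut; intro v hb hi
    simp only [hi]; cases v X <;> cases v q <;> rfl
  exact this.mp h

theorem pcomp {d a b c} (h1 : Prv d (imp a b)) (h2 : Prv d (imp b c)) :
    Prv d (imp a c) := wmp (wthm h2) h1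

theorem wexfalso {d X q} (h : Prv d (imp X bot)) : Prv d (imp X q) := by
  refine wmp ?_ h
  apply Prv.taut; intro v hb hi
  simp only [hi, hb]; cases v X <;> cases v q <;> rfl

/-- case analysis on the shape used by `simNeg` -/
theorem simNeg_cases (φ : Formula) :
    (∃ c, φ = imp c bot ∧ simNeg φ = c) ∨
      (simNeg φ = neg φ ∧ ∀ c, φ ≠ imp c bot) := by
  cases φ with
  | var n => exact .inr ⟨rfl, by intro c h; cases h⟩
  | bot => exact .inr ⟨rfl, by intro c h; cases h⟩
  | tri a b => exact .inr ⟨rfl, by intro c h; cases h⟩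
  | imp a b =>
    cases b with
    | var n => exact .inr ⟨rfl, by intro c h; cases h⟩
    | bot => exact .inl ⟨a, rfl, rfl⟩
    | imp x y => exact .inr ⟨rfl, by intro c h; cases h⟩
    | tri x y => exact .inr ⟨rfl, by intro c h; cases h⟩

theorem prv_pair_bot {d} (φ : Formula) : Prv d (imp φ (imp (simNeg φ) bot)) := by
  rcases simNeg_cases φ with ⟨c, rfl, hs⟩ | ⟨hs, -⟩ <;> rw [hs]
  · apply Prv.taut; intro v hb hi
    simp only [neg, hi, hb]; cases v c <;> rfl
  · apply Prv.taut; intro v hb hi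
    simp only [neg, hi, hb]; cases v φ <;> rfl

theorem prv_simNeg_neg {d} (φ : Formula) : Prv d (imp (simNeg φ) (neg φ)) := by
  rcases simNeg_cases φ with ⟨c, rfl, hs⟩ | ⟨hs, -⟩ <;> rw [hs]
  · apply Prv.taut; intro v hb hi
    simp only [neg, hi, hb]; cases v c <;> rfl
  · apply Prv.taut; intro v hb hi
    simp only [neg, hi, hb]; cases v φ <;> rfl

theorem prv_neg_simNeg {d} (φ : Formula) : Prv d (imp (neg φ) (simNeg φ)) := by
  rcases simNeg_cases φ with ⟨c, rfl, hs⟩ | ⟨hs, -⟩ <;> rw [hs]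
  · apply Prv.taut; intro v hb hi
    simp only [neg, hi, hb]; cases v c <;> rfl
  · apply Prv.taut; intro v hb hi
    simp only [neg, hi, hb]; cases v φ <;> rfl

/-! ### list conjunction / disjunction -/

def disjList : List Formula → Formula
  | [] => bot
  | φ :: l => disj φ (disjList l)

section Val
variable {v : Formula → Bool} (hb : v bot = false)
  (hi : ∀ a b, v (imp a b) = (!(v a) || v b))
include hb hi

theorem v_top : v top = true := by simp only [top, neg, hi, hb]; rfl
theorem v_neg (a) : v (neg a) = !(v a) := by simp only [neg, hi, hb]; cases v a <;> rfl
theorem v_conj (a b) : v (conj a b) = (v a && v b) := by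
  simp only [conj, neg, hi, hb]; cases v a <;> cases v b <;> rfl
theorem v_disj (a b) : v (disj a b) = (v a || v b) := by
  simp only [disj, neg, hi, hb]; cases v a <;> cases v b <;> rfl

theorem v_conjList (l : List Formula) :
    v (conjList l) = true ↔ ∀ x ∈ l, v x = true := by
  induction l with
  | nil => simp [conjList, v_top hb hi]
  | cons a l ih => simp [conjList, v_conj hb hi, ih]

theorem v_disjList (l : List Formula) :
    v (disjList l) = true ↔ ∃ x ∈ l, v x = true := by
  induction l with
  | nil => simp [disjList, hb]
  | cons a l ih => simp [disjList, v_disj hb hi, ih]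

end Val

theorem prv_conjList_mem {d l φ} (h : φ ∈ l) : Prv d (imp (conjList l) φ) := by
  apply Prv.taut; intro v hb hi
  rw [hi]
  cases hc : v (conjList l) with
  | false => rfl
  | true => rw [(v_conjList hb hi l).mp hc φ h]; rfl

theorem prv_disjList_mem {d l φ} (h : φ ∈ l) : Prv d (imp φ (disjList l)) := by
  apply Prv.taut; intro v hb hi
  rw [hi]
  cases hc : v φ with
  | false => rfl
  | true => rw [(v_disjList hb hi l).mpr ⟨φ, h, hc⟩]; simp

theorem prv_disjList_elim {d l Y} (h : ∀ x ∈ l, Prv d (imp x Y)) :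
    Prv d (imp (disjList l) Y) := by
  induction l with
  | nil =>
    apply Prv.taut; intro v hb hi
    simp only [disjList, hi, hb]; cases v Y <;> rfl
  | cons a l ih =>
    have ha := h a List.mem_cons_self
    have hl := ih fun x hx => h x (List.mem_cons_of_mem a hx)
    have t3 : Prv d (imp (imp a Y) (imp (imp (disjList l) Y) (imp (disjList (a :: l)) Y))) := by
      apply Prv.taut; intro v hb hi
      simp only [disjList, disj, neg, hi, hb]
      cases v a <;> cases v (disjList l) <;> cases v Y <;> rfl
    exact (t3.mp ha).mp hl

/-! ### full sets over a finite sim-closed set -/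

noncomputable def alpha (s : Finset Formula) : Formula := conjList s.toList

def FullSets (Φ : Finset Formula) : Finset (Finset Formula) :=
  Φ.powerset.filter (fun s => ∀ φ ∈ Φ, φ ∈ s ∨ simNeg φ ∈ s)

/-- every valuation makes some full subset of Φ true: the disjunction of all
full subsets is a propositional tautology. -/
theorem prv_cover {d} (Φ : Finset Formula) (hsim : ∀ φ ∈ Φ, simNeg φ ∈ Φ) :
    Prv d (disjList ((FullSets Φ).toList.map alpha)) := by
  apply Prv.taut; intro v hb hi
  classical
  set s : Finset Formula := Φ.filter (fun φ => v φ = true) with hs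
  have hfull : s ∈ FullSets Φ := by
    rw [FullSets, Finset.mem_filter, Finset.mem_powerset]
    refine ⟨Finset.filter_subset _ _, fun φ hφ => ?_⟩
    by_cases hv : v φ = true
    · exact Or.inl (Finset.mem_filter.mpr ⟨hφ, hv⟩)
    · right
      refine Finset.mem_filter.mpr ⟨hsim φ hφ, ?_⟩
      have hvf : v φ = false := by cases h' : v φ; rfl; exact absurd h' hv
      rcases simNeg_cases φ with ⟨c, rfl, hc⟩ | ⟨hc, -⟩
      · rw [hc]
        have := hi c bot
        rw [hb, hvf] at this
        cases h'' : v c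
        · rw [h''] at this; simp at this
        · rfl
      · rw [hc, v_neg hb hi, hvf]; rfl
  refine (v_disjList hb hi _).mpr ⟨alpha s, List.mem_map.mpr ⟨s, Finset.mem_toList.mpr hfull, rfl⟩, ?_⟩
  refine (v_conjList hb hi _).mpr fun x hx => ?_
  exact (Finset.mem_filter.mp (Finset.mem_toList.mp hx)).2

/-- consistency of a finite set -/
def Con (d : Bool) (s : Finset Formula) : Prop := ¬ Prv d (imp (alpha s) bot)

theorem prv_mem {d φ} {s : Finset Formula} (h : φ ∈ s) : Prv d (imp (alpha s) φ) :=
  prv_conjList_mem (Finset.mem_toList.mpr h)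

theorem max_mem {d Φ φ} {s : Finset Formula} (hf : s ∈ FullSets Φ) (hc : Con d s)
    (hp : Prv d (imp (alpha s) φ)) (hΦ : φ ∈ Φ) : φ ∈ s := by
  rcases (Finset.mem_filter.mp hf).2 φ hΦ with h | h
  · exact h
  · exfalso
    exact hc (wmp (wmp (wthm (prv_pair_bot φ)) hp) (prv_mem h))

/-! ### subformula closure -/

def subf : Formula → Finset Formula
  | var n => {var n}
  | bot => {bot}
  | imp a b => insert (imp a b) (subf a ∪ subf b)
  | tri a b => insert (tri a b) (subf a ∪ subf b)

theorem self_mem_subf (φ : Formula) : φ ∈ subf φ := by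
  cases φ <;> simp [subf]

theorem subf_imp_left {a b : Formula} : a ∈ subf (imp a b) := by
  simp [subf, self_mem_subf]
theorem subf_imp_right {a b : Formula} : b ∈ subf (imp a b) := by
  simp [subf, self_mem_subf]
theorem subf_tri_left {a b : Formula} : a ∈ subf (tri a b) := by
  simp [subf, self_mem_subf]
theorem subf_tri_right {a b : Formula} : b ∈ subf (tri a b) := by
  simp [subf, self_mem_subf]

theorem subf_closed_imp {φ a b : Formula} (h : imp a b ∈ subf φ) :
    a ∈ subf φ ∧ b ∈ subf φ := by
  induction φ with
  | var n => simp [subf] at h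
  | bot => simp [subf] at h
  | imp p q ihp ihq =>
    simp only [subf, Finset.mem_insert, Finset.mem_union] at h ⊢
    rcases h with h | h | h
    · cases h; exact ⟨Or.inr (Or.inl (self_mem_subf a)), Or.inr (Or.inr (self_mem_subf b))⟩
    · exact ⟨Or.inr (Or.inl (ihp h).1), Or.inr (Or.inl (ihp h).2)⟩
    · exact ⟨Or.inr (Or.inr (ihq h).1), Or.inr (Or.inr (ihq h).2)⟩
  | tri p q ihp ihq =>
    simp only [subf, Finset.mem_insert, Finset.mem_union] at h ⊢
    rcases h with h | h | h
    · cases h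
    · exact ⟨Or.inr (Or.inl (ihp h).1), Or.inr (Or.inl (ihp h).2)⟩
    · exact ⟨Or.inr (Or.inr (ihq h).1), Or.inr (Or.inr (ihq h).2)⟩

theorem subf_closed_tri {φ a b : Formula} (h : tri a b ∈ subf φ) :
    a ∈ subf φ ∧ b ∈ subf φ := by
  induction φ with
  | var n => simp [subf] at h
  | bot => simp [subf] at h
  | imp p q ihp ihq =>
    simp only [subf, Finset.mem_insert, Finset.mem_union] at h ⊢
    rcases h with h | h | h
    · cases h
    · exact ⟨Or.inr (Or.inl (ihp h).1), Or.inr (Or.inl (ihp h).2)⟩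
    · exact ⟨Or.inr (Or.inr (ihq h).1), Or.inr (Or.inr (ihq h).2)⟩
  | tri p q ihp ihq =>
    simp only [subf, Finset.mem_insert, Finset.mem_union] at h ⊢
    rcases h with h | h | h
    · cases h; exact ⟨Or.inr (Or.inl (self_mem_subf a)), Or.inr (Or.inr (self_mem_subf b))⟩
    · exact ⟨Or.inr (Or.inl (ihp h).1), Or.inr (Or.inl (ihp h).2)⟩
    · exact ⟨Or.inr (Or.inr (ihq h).1), Or.inr (Or.inr (ihq h).2)⟩

/-- closure of (subformulas of) φ under ∼, plus ⊥ -/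
def clo (φ : Formula) : Finset Formula :=
  insert bot (subf φ) ∪ (insert bot (subf φ)).image simNeg

theorem subf_subset_clo (φ : Formula) : subf φ ⊆ clo φ := fun x hx =>
  Finset.mem_union_left _ (Finset.mem_insert_of_mem hx)

theorem self_mem_clo (φ : Formula) : φ ∈ clo φ := subf_subset_clo φ (self_mem_subf φ)

theorem bot_mem_clo (φ : Formula) : bot ∈ clo φ :=
  Finset.mem_union_left _ (Finset.mem_insert_self _ _)

theorem clo_sim_closed (φ : Formula) : ∀ ψ ∈ clo φ, simNeg ψ ∈ clo φ := by
  intro ψ hψ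
  rcases Finset.mem_union.mp hψ with h | h
  · exact Finset.mem_union_right _ (Finset.mem_image_of_mem _ h)
  · rcases Finset.mem_image.mp h with ⟨χ, hχ, rfl⟩
    rcases simNeg_cases χ with ⟨c, rfl, hc⟩ | ⟨hc, -⟩
    · rw [hc]
      rcases Finset.mem_insert.mp hχ with h' | h'
      · cases h'
      · have hcs : c ∈ subf φ := (subf_closed_imp h').1
        exact Finset.mem_union_right _
          (Finset.mem_image_of_mem _ (Finset.mem_insert_of_mem hcs))
    · rw [hc]
      show simNeg (imp χ bot) ∈ clo φ
      rw [show simNeg (imp χ bot) = χ from rfl]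
      exact Finset.mem_union_left _ hχ

theorem clo_closed_imp {φ a b : Formula} (h : imp a b ∈ clo φ) :
    a ∈ clo φ ∧ b ∈ clo φ := by
  rcases Finset.mem_union.mp h with h' | h'
  · rcases Finset.mem_insert.mp h' with h'' | h''
    · cases h''
    · exact ⟨subf_subset_clo φ (subf_closed_imp h'').1,
        subf_subset_clo φ (subf_closed_imp h'').2⟩
  · rcases Finset.mem_image.mp h' with ⟨χ, hχ, hχ2⟩
    rcases simNeg_cases χ with ⟨c, rfl, hc⟩ | ⟨hc, -⟩
    · rw [hc] at hχ2
      rcases Finset.mem_insert.mp hχ with h'' | h''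
      · cases h''
      · have hcs : c ∈ subf φ := (subf_closed_imp h'').1
        rw [hχ2] at hcs
        exact ⟨subf_subset_clo φ (subf_closed_imp hcs).1,
          subf_subset_clo φ (subf_closed_imp hcs).2⟩
    · rw [hc] at hχ2
      cases hχ2
      exact ⟨Finset.mem_union_left _ hχ, bot_mem_clo φ⟩

theorem clo_closed_tri {φ a b : Formula} (h : tri a b ∈ clo φ) :
    a ∈ clo φ ∧ b ∈ clo φ := by
  rcases Finset.mem_union.mp h with h' | h'
  · rcases Finset.mem_insert.mp h' with h'' | h''
    · cases h''
    · exact ⟨subf_subset_clo φ (subf_closed_tri h'').1,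
        subf_subset_clo φ (subf_closed_tri h'').2⟩
  · rcases Finset.mem_image.mp h' with ⟨χ, hχ, hχ2⟩
    rcases simNeg_cases χ with ⟨c, rfl, hc⟩ | ⟨hc, -⟩
    · rw [hc] at hχ2
      rcases Finset.mem_insert.mp hχ with h'' | h''
      · cases h''
      · have hcs : c ∈ subf φ := (subf_closed_imp h'').1
        rw [hχ2] at hcs
        exact ⟨subf_subset_clo φ (subf_closed_tri hcs).1,
          subf_subset_clo φ (subf_closed_tri hcs).2⟩
    · rw [hc] at hχ2; cases hχ2

theorem var_mem_clo {φ : Formula} {p : ℕ} (h : var p ∈ clo φ) : var p ∈ subf φ := by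
  rcases Finset.mem_union.mp h with h' | h'
  · rcases Finset.mem_insert.mp h' with h'' | h''
    · cases h''
    · exact h''
  · rcases Finset.mem_image.mp h' with ⟨χ, hχ, hχ2⟩
    rcases simNeg_cases χ with ⟨c, rfl, hc⟩ | ⟨hc, -⟩
    · rw [hc] at hχ2
      rcases Finset.mem_insert.mp hχ with h'' | h''
      · cases h''
      · rw [← hχ2]; exact (subf_closed_imp h'').1
    · rw [hc] at hχ2; cases hχ2

/-! ### finite-model semantics on an initial segment of ℕ -/

def GF (k : ℕ) (R : ℕ → ℕ → ℕ → Prop) (V : ℕ → ℕ → Prop) : Formula → ℕ → Prop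
  | var p, w => V w p
  | bot, _ => False
  | imp a b, w => GF k R V a w → GF k R V b w
  | tri a b, w => ∀ u v, u < k → v < k → R w u v → GF k R V a u →
      ∃ v', v' < k ∧ R w u v' ∧ GF k R V b v'

theorem GF_sound {d : Bool} {φ : Formula} (h : Prv d φ) (hd : d = false)
    (k : ℕ) (R : ℕ → ℕ → ℕ → Prop) (V : ℕ → ℕ → Prop) :
    ∀ w, w < k → GF k R V φ w := by
  classical
  induction h with
  | @taut d ψ ht =>
    intro w hw
    have := ht (fun χ => decide (GF k R V χ w)) (decide_eq_false (p := GF k R V bot w) id)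
      (fun a b => by
        by_cases h1 : GF k R V a w <;> by_cases h2 : GF k R V b w <;>
          simp [GF, h1, h2])
    simpa using this
  | a1 a b c =>
    intro w hw
    intro h1 h2 u v hu hv hR hd
    by_cases hφ : GF k R V a u
    · exact h1 u v hu hv hR hφ
    · exact h2 u v hu hv hR (hd fun h' => absurd h' hφ)
  | a2 a => intro w hw u v hu hv hR hbot; exact absurd hbot (by simp [GF])
  | a3 a => intro w hw u v hu hv hR ha; exact ⟨v, hv, hR, fun h => h⟩
  | a4 a b c => cases hd
  | mp h1 h2 ih1 ih2 =>
    intro w hw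
    exact (ih1 hd w hw) (ih2 hd w hw)
  | mono h1 h2 ih1 ih2 =>
    intro w hw ht u v hu hv hR ha
    obtain ⟨v', hv', hR', hb⟩ := ht u v hu hv hR (ih1 hd u hu ha)
    exact ⟨v', hv', hR', ih2 hd v' hv' hb⟩

/-! ### more tautologies -/

theorem taut_k {d} (X Y : Formula) : Prv d (imp X (imp Y X)) := by
  apply Prv.taut; intro v hb hi
  simp only [hi]; cases v X <;> cases v Y <;> rfl

theorem taut_id {d} (X : Formula) : Prv d (imp X X) := by
  apply Prv.taut; intro v hb hi
  simp only [hi]; cases v X <;> rfl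

theorem taut_negelim {d} (X Z : Formula) : Prv d (imp (neg X) (imp X Z)) := by
  apply Prv.taut; intro v hb hi
  simp only [neg, hi, hb]; cases v X <;> cases v Z <;> rfl

theorem taut_din {d} (X Z : Formula) : Prv d (imp X (imp (neg X) Z)) := by
  apply Prv.taut; intro v hb hi
  simp only [neg, hi, hb]; cases v X <;> cases v Z <;> rfl

theorem taut_swapneg {d} (X Y : Formula) :
    Prv d (imp (imp X (neg Y)) (imp Y (neg X))) := by
  apply Prv.taut; intro v hb hi
  simp only [neg, hi, hb]; cases v X <;> cases v Y <;> rfl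

theorem taut_nimp_left {d} (X Y : Formula) : Prv d (imp (neg (imp X Y)) X) := by
  apply Prv.taut; intro v hb hi
  simp only [neg, hi, hb]; cases v X <;> cases v Y <;> rfl

theorem taut_nimp_right {d} (X Y : Formula) : Prv d (imp (neg (imp X Y)) (neg Y)) := by
  apply Prv.taut; intro v hb hi
  simp only [neg, hi, hb]; cases v X <;> cases v Y <;> rfl

/-! ### the canonical finite model of an unprovable formula -/

section Canonical

open Classical

variable (φ₀ : Formula)

noncomputable def MC : Finset (Finset Formula) :=
  (FullSets (clo φ₀)).filter (fun s => ¬ Prv false (imp (alpha s) bot))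

theorem MC_full {s} (h : s ∈ MC φ₀) : s ∈ FullSets (clo φ₀) :=
  (Finset.mem_filter.mp h).1

theorem MC_con {s} (h : s ∈ MC φ₀) : Con false s :=
  (Finset.mem_filter.mp h).2

theorem MC_or {s ψ} (h : s ∈ MC φ₀) (hψ : ψ ∈ clo φ₀) : ψ ∈ s ∨ simNeg ψ ∈ s := by
  have := MC_full φ₀ h
  rw [FullSets, Finset.mem_filter] at this
  exact this.2 ψ hψ

noncomputable def delta (T : Finset (Finset Formula)) : Formula :=
  disjList (T.toList.map alpha)

/-- if Y is a consequence of every maximal consistent subset of `clo φ₀`,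
then Y is provable -/
theorem elimMC {Y : Formula} (h : ∀ s ∈ MC φ₀, Prv false (imp (alpha s) Y)) :
    Prv false Y := by
  have hc : Prv false (disjList (((FullSets (clo φ₀))).toList.map alpha)) :=
    prv_cover _ (clo_sim_closed φ₀)
  refine (prv_disjList_elim fun x hx => ?_).mp hc
  rcases List.mem_map.mp hx with ⟨s, hs, rfl⟩
  have hs' : s ∈ FullSets (clo φ₀) := Finset.mem_toList.mp hs
  by_cases hcon : Prv false (imp (alpha s) bot)
  · exact wexfalso hcon
  · exact h s (Finset.mem_filter.mpr ⟨hs', hcon⟩)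

/-- if b avoids every member of T, then provably b implies ¬δT -/
theorem prv_avoid {b : Formula} {T : Finset (Finset Formula)} (hT : T ⊆ MC φ₀)
    (hb : b ∈ clo φ₀) (h : ∀ v' ∈ T, b ∉ v') :
    Prv false (imp b (neg (delta T))) := by
  have h1 : Prv false (imp (delta T) (neg b)) := by
    refine prv_disjList_elim fun x hx => ?_
    rcases List.mem_map.mp hx with ⟨v', hv', rfl⟩
    have hv'T : v' ∈ T := Finset.mem_toList.mp hv'
    have hmc := hT hv'T
    rcases MC_or φ₀ hmc hb with hbv | hbv
    · exact absurd hbv (h v' hv'T)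
    · exact pcomp (prv_mem hbv) (prv_simNeg_neg b)
  exact (taut_swapneg (delta T) b).mp h1

/-- provably, a implies the disjunction of all maximal consistent sets
containing a -/
theorem prv_toward {a : Formula} (ha : a ∈ clo φ₀) :
    Prv false (imp a (delta ((MC φ₀).filter (fun s => a ∈ s)))) := by
  refine elimMC φ₀ fun s hs => ?_
  by_cases has : a ∈ s
  · have : Prv false (imp (alpha s) (delta ((MC φ₀).filter (fun s => a ∈ s)))) :=
      prv_disjList_mem (List.mem_map.mpr ⟨s, Finset.mem_toList.mpr
        (Finset.mem_filter.mpr ⟨hs, has⟩), rfl⟩)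
    exact pcomp this (taut_k _ a)
  · rcases MC_or φ₀ hs ha with h | h
    · exact absurd h has
    · exact pcomp (pcomp (prv_mem h) (prv_simNeg_neg a)) (taut_negelim a _)

/-- provably, ¬(δ of all maximal consistent sets avoiding b) implies b -/
theorem prv_back {b : Formula} (hb : b ∈ clo φ₀) :
    Prv false (imp (neg (delta ((MC φ₀).filter (fun s => b ∉ s)))) b) := by
  have : ∀ s ∈ MC φ₀,
      Prv false (imp (alpha s) (imp (neg (delta ((MC φ₀).filter (fun s => b ∉ s)))) b)) := by
    intro s hs
    by_cases hbs : b ∈ s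
    · exact pcomp (prv_mem hbs) (taut_k b _)
    · have : Prv false (imp (alpha s) (delta ((MC φ₀).filter (fun s => b ∉ s)))) :=
        prv_disjList_mem (List.mem_map.mpr ⟨s, Finset.mem_toList.mpr
          (Finset.mem_filter.mpr ⟨hs, hbs⟩), rfl⟩)
      exact pcomp this (taut_din _ b)
  exact elimMC φ₀ this

/-- iterated A1 -/
theorem prv_tri_disjList {d W b} {l : List Formula}
    (h : ∀ x ∈ l, Prv d (imp W (tri x b))) :
    Prv d (imp W (tri (disjList l) b)) := by
  induction l with
  | nil => exact wthm (Prv.a2 b)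
  | cons a l ih =>
    exact wmp (wmp (wthm (Prv.a1 a b (disjList l))) (h a List.mem_cons_self))
      (ih fun x hx => h x (List.mem_cons_of_mem a hx))

noncomputable def WL : List (Finset Formula × Finset (Finset Formula)) :=
  ((MC φ₀) ×ˢ (MC φ₀).powerset).toList

noncomputable def kC : ℕ := (WL φ₀).length

noncomputable def fstC (i : ℕ) : Finset Formula := ((WL φ₀).getD i (∅, ∅)).1
noncomputable def sndC (i : ℕ) : Finset (Finset Formula) := ((WL φ₀).getD i (∅, ∅)).2

def RC (w u v : ℕ) : Prop :=
  fstC φ₀ v ∈ sndC φ₀ u ∧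
    ¬ Prv false (imp (alpha (fstC φ₀ w))
      (tri (alpha (fstC φ₀ u)) (neg (delta (sndC φ₀ u)))))

def VC (w p : ℕ) : Prop := var p ∈ fstC φ₀ w

theorem index_wf {i : ℕ} (hi : i < kC φ₀) :
    fstC φ₀ i ∈ MC φ₀ ∧ sndC φ₀ i ⊆ MC φ₀ := by
  have : (WL φ₀).getD i (∅, ∅) ∈ WL φ₀ := by
    rw [List.getD_eq_getElem _ _ hi]; exact List.getElem_mem hi
  have := Finset.mem_product.mp (Finset.mem_toList.mp this)
  exact ⟨this.1, Finset.mem_powerset.mp this.2⟩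

theorem exists_index {s : Finset Formula} {T : Finset (Finset Formula)}
    (hs : s ∈ MC φ₀) (hT : T ⊆ MC φ₀) :
    ∃ i, i < kC φ₀ ∧ fstC φ₀ i = s ∧ sndC φ₀ i = T := by
  have : (s, T) ∈ WL φ₀ := Finset.mem_toList.mpr
    (Finset.mem_product.mpr ⟨hs, Finset.mem_powerset.mpr hT⟩)
  rcases List.mem_iff_getElem.mp this with ⟨i, hil, hig⟩
  refine ⟨i, hil, ?_, ?_⟩
  · rw [fstC, List.getD_eq_getElem _ _ hil, hig]
  · rw [sndC, List.getD_eq_getElem _ _ hil, hig]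

theorem truth_lemma : ∀ ψ, ψ ∈ clo φ₀ → ∀ i, i < kC φ₀ →
    (GF (kC φ₀) (RC φ₀) (VC φ₀) ψ i ↔ ψ ∈ fstC φ₀ i) := by
  intro ψ
  induction ψ with
  | var p => intro _ i hi; exact Iff.rfl
  | bot =>
    intro _ i hi
    simp only [GF, false_iff]
    intro hmem
    exact MC_con φ₀ (index_wf φ₀ hi).1 (prv_mem hmem)
  | imp a b iha ihb =>
    intro hΦ i hi
    obtain ⟨haΦ, hbΦ⟩ := clo_closed_imp hΦ
    have hx := (index_wf φ₀ hi).1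
    constructor
    · intro hGF
      by_contra hni
      rcases MC_or φ₀ hx hΦ with h | h
      · exact hni h
      rcases simNeg_cases (imp a b) with ⟨c, heq, hsn⟩ | ⟨hsn, -⟩
      · -- b = bot, simNeg (imp a bot) = a
        injection heq with h1 h2
        subst h1; subst h2
        rw [hsn] at h
        exact hGF ((iha haΦ i hi).mpr h)
      · rw [hsn] at h
        have hxa : Prv false (imp (alpha (fstC φ₀ i)) a) :=
          pcomp (prv_mem h) (taut_nimp_left a b)
        have hxb' : Prv false (imp (alpha (fstC φ₀ i)) (neg b)) :=
          pcomp (prv_mem h) (taut_nimp_right a b)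
        have hax : a ∈ fstC φ₀ i := max_mem (MC_full φ₀ hx) (MC_con φ₀ hx) hxa haΦ
        have hbx : b ∈ fstC φ₀ i := (ihb hbΦ i hi).mp (hGF ((iha haΦ i hi).mpr hax))
        exact MC_con φ₀ hx (wmp hxb' (prv_mem hbx))
    · intro hmem hGFa
      have hax : a ∈ fstC φ₀ i := (iha haΦ i hi).mp hGFa
      have : Prv false (imp (alpha (fstC φ₀ i)) b) := wmp (prv_mem hmem) (prv_mem hax)
      exact (ihb hbΦ i hi).mpr (max_mem (MC_full φ₀ hx) (MC_con φ₀ hx) this hbΦ)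
  | tri a b iha ihb =>
    intro hΦ i hi
    obtain ⟨haΦ, hbΦ⟩ := clo_closed_tri hΦ
    have hx := (index_wf φ₀ hi).1
    constructor
    · intro hGF
      by_contra hni
      rcases MC_or φ₀ hx hΦ with h | h
      · exact hni h
      have hsn : simNeg (tri a b) = neg (tri a b) := by
        rcases simNeg_cases (tri a b) with ⟨c, heq, -⟩ | ⟨hsn, -⟩
        · cases heq
        · exact hsn
      rw [hsn] at h
      have hxn : Prv false (imp (alpha (fstC φ₀ i)) (neg (tri a b))) := prv_mem h
      -- find a witness u₀
      have hwit : ∃ u₀ ∈ MC φ₀, a ∈ u₀ ∧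
          ¬ Prv false (imp (alpha (fstC φ₀ i)) (tri (alpha u₀) b)) := by
        by_contra hno
        push_neg at hno
        have hall : ∀ x ∈ ((MC φ₀).filter (fun s => a ∈ s)).toList.map alpha,
            Prv false (imp (alpha (fstC φ₀ i)) (tri x b)) := by
          intro x hxm
          rcases List.mem_map.mp hxm with ⟨u₀, hu₀, rfl⟩
          have := Finset.mem_filter.mp (Finset.mem_toList.mp hu₀)
          exact hno u₀ this.1 this.2
        have h1 : Prv false (imp (alpha (fstC φ₀ i))
            (tri (delta ((MC φ₀).filter (fun s => a ∈ s))) b)) :=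
          prv_tri_disjList hall
        have h2 : Prv false (imp (tri (delta ((MC φ₀).filter (fun s => a ∈ s))) b)
            (tri a b)) := Prv.mono (prv_toward φ₀ haΦ) (taut_id b)
        have h3 : Prv false (imp (alpha (fstC φ₀ i)) (tri a b)) :=
          pcomp h1 h2
        exact MC_con φ₀ hx (wmp hxn h3)
      obtain ⟨u₀, hu₀MC, hau₀, hnd⟩ := hwit
      set S₀ := (MC φ₀).filter (fun s => b ∉ s) with hS₀
      have hclaim : ¬ Prv false (imp (alpha (fstC φ₀ i))
          (tri (alpha u₀) (neg (delta S₀)))) := by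
        intro hP
        have h2 : Prv false (imp (tri (alpha u₀) (neg (delta S₀))) (tri (alpha u₀) b)) :=
          Prv.mono (taut_id (alpha u₀)) (prv_back φ₀ hbΦ)
        exact hnd (pcomp hP h2)
      have hS₀ne : S₀.Nonempty := by
        by_contra h0
        rw [Finset.not_nonempty_iff_eq_empty] at h0
        apply hclaim
        have : delta S₀ = bot := by rw [h0, delta, Finset.toList_empty]; rfl
        rw [this]
        exact wthm (Prv.a3 (alpha u₀))
      obtain ⟨v₀, hv₀⟩ := hS₀ne
      have hv₀MC : v₀ ∈ MC φ₀ := (Finset.mem_filter.mp hv₀).1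
      have hbv₀ : b ∉ v₀ := (Finset.mem_filter.mp hv₀).2
      have hS₀sub : S₀ ⊆ MC φ₀ := Finset.filter_subset _ _
      obtain ⟨j₀, hj₀k, hj₀f, hj₀s⟩ := exists_index φ₀ hu₀MC hS₀sub
      obtain ⟨j₁, hj₁k, hj₁f, hj₁s⟩ := exists_index φ₀ hv₀MC
        (Finset.empty_subset _)
      have hR : RC φ₀ i j₀ j₁ := by
        constructor
        · rw [hj₁f, hj₀s]; exact hv₀
        · rw [hj₀f, hj₀s]; exact hclaim
      obtain ⟨v', hv'k, hR', hGFb⟩ := hGF j₀ j₁ hj₀k hj₁k hR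
        ((iha haΦ j₀ hj₀k).mpr (by rw [hj₀f]; exact hau₀))
      have : fstC φ₀ v' ∈ S₀ := by rw [← hj₀s]; exact hR'.1
      exact (Finset.mem_filter.mp this).2 ((ihb hbΦ v' hv'k).mp hGFb)
    · intro hmem u v hu hv hR hGFa
      have hau : a ∈ fstC φ₀ u := (iha haΦ u hu).mp hGFa
      obtain ⟨hmemR, hnd⟩ := hR
      -- every set in sndC u contains b, else contradiction
      have hex : ∃ v'₀ ∈ sndC φ₀ u, b ∈ v'₀ := by
        by_contra hno
        push_neg at hno
        have h1 : Prv false (imp b (neg (delta (sndC φ₀ u)))) :=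
          prv_avoid φ₀ (index_wf φ₀ hu).2 hbΦ hno
        have h2 : Prv false (imp (tri a b)
            (tri (alpha (fstC φ₀ u)) (neg (delta (sndC φ₀ u))))) :=
          Prv.mono (prv_mem hau) h1
        exact hnd (pcomp (prv_mem hmem) h2)
      obtain ⟨v'₀, hv'₀mem, hbv'₀⟩ := hex
      have hv'₀MC : v'₀ ∈ MC φ₀ := (index_wf φ₀ hu).2 hv'₀mem
      obtain ⟨j, hjk, hjf, hjs⟩ := exists_index φ₀ hv'₀MC (Finset.empty_subset _)
      refine ⟨j, hjk, ⟨by rw [hjf]; exact hv'₀mem, hnd⟩, ?_⟩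
      exact (ihb hbΦ j hjk).mpr (by rw [hjf]; exact hbv'₀)

theorem counter_model (hnp : ¬ Prv false φ₀) :
    ∃ i, i < kC φ₀ ∧ ¬ GF (kC φ₀) (RC φ₀) (VC φ₀) φ₀ i := by
  have hex : ∃ s ∈ MC φ₀, simNeg φ₀ ∈ s := by
    by_contra hno
    push_neg at hno
    apply hnp
    refine elimMC φ₀ fun s hs => ?_
    rcases MC_or φ₀ hs (self_mem_clo φ₀) with h | h
    · exact prv_mem h
    · exact absurd h (hno s hs)
  obtain ⟨s, hsMC, hss⟩ := hex
  have hφ₀s : φ₀ ∉ s := by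
    intro hmem
    exact MC_con φ₀ hsMC (wmp (wmp (wthm (prv_pair_bot φ₀)) (prv_mem hmem)) (prv_mem hss))
  obtain ⟨i, hik, hif, -⟩ := exists_index φ₀ hsMC (Finset.empty_subset _)
  refine ⟨i, hik, fun hGF => ?_⟩
  apply hφ₀s
  rw [← hif]
  exact (truth_lemma φ₀ φ₀ (self_mem_clo φ₀) i hik).mp hGF

end Canonical

/-! ### bit encodings -/

def bitB (x i : ℕ) : Bool := decide (x / 2^i % 2 = 1)

def fromBits (g : ℕ → Bool) : ℕ → ℕ
  | 0 => 0
  | m+1 => fromBits g m + (if g m then 2^m else 0)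

theorem fromBits_lt (g : ℕ → Bool) (m : ℕ) : fromBits g m < 2^m := by
  induction m with
  | zero => simp [fromBits]
  | succ m ih =>
    have : (if g m then 2^m else 0) ≤ 2^m := by split <;> simp
    calc fromBits g (m+1) = fromBits g m + _ := rfl
      _ < 2^m + 2^m := by omega
      _ = 2^(m+1) := by ring

theorem bitB_add_high {a i m : ℕ} (him : i < m) (c : Bool) :
    bitB (a + (if c then 2^m else 0)) i = bitB a i := by
  have hdvd : (if c then 2^m else 0) = 2^i * (2 * (if c then 2^(m-i-1) else 0)) := by
    cases c
    · simp
    · simp only [if_pos]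
      rw [show 2 * (2:ℕ)^(m-i-1) = 2^(m-i) from by rw [← pow_succ']; congr 1; omega,
        ← pow_add]
      congr 1
      omega
  rw [bitB, bitB, hdvd, Nat.add_mul_div_left _ _ (Nat.pow_pos (n := i) (by norm_num)),
    Nat.add_mul_mod_self_left]

theorem bitB_high (a m : ℕ) (ha : a < 2^m) (c : Bool) :
    bitB (a + (if c then 2^m else 0)) m = c := by
  have h1 : a / 2^m = 0 := Nat.div_eq_of_lt ha
  cases c
  · simp [bitB, h1]
  · simp only [if_pos]
    rw [bitB, show a + 2^m = a + 2^m * 1 from by ring,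
      Nat.add_mul_div_left _ _ (Nat.pow_pos (n := m) (by norm_num)), h1]
    simp

theorem bitB_fromBits (g : ℕ → Bool) {i m : ℕ} (h : i < m) :
    bitB (fromBits g m) i = g i := by
  induction m with
  | zero => omega
  | succ m ih =>
    rcases Nat.lt_succ_iff_lt_or_eq.mp h with h' | h'
    · rw [fromBits, bitB_add_high h', ih h']
    · subst h'
      rw [fromBits, bitB_high _ _ (fromBits_lt g i)]

def RB (r k : ℕ) (w u v : ℕ) : Prop := bitB r ((w*k+u)*k+v) = true
def VB (vl P : ℕ) (w p : ℕ) : Prop := bitB vl (w*P+p) = true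

/-! ### GF only depends on R, V below k / on variables of the formula -/

theorem subf_imp_subset_left {a b : Formula} : subf a ⊆ subf (imp a b) := fun x hx =>
  Finset.mem_insert_of_mem (Finset.mem_union_left _ hx)
theorem subf_imp_subset_right {a b : Formula} : subf b ⊆ subf (imp a b) := fun x hx =>
  Finset.mem_insert_of_mem (Finset.mem_union_right _ hx)
theorem subf_tri_subset_left {a b : Formula} : subf a ⊆ subf (tri a b) := fun x hx =>
  Finset.mem_insert_of_mem (Finset.mem_union_left _ hx)
theorem subf_tri_subset_right {a b : Formula} : subf b ⊆ subf (tri a b) := fun x hx =>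
  Finset.mem_insert_of_mem (Finset.mem_union_right _ hx)

theorem GF_congr {k : ℕ} {R R' : ℕ → ℕ → ℕ → Prop} {V V' : ℕ → ℕ → Prop}
    (hR : ∀ w u v, w < k → u < k → v < k → (R w u v ↔ R' w u v)) :
    ∀ (ψ : Formula), (∀ w p, w < k → var p ∈ subf ψ → (V w p ↔ V' w p)) →
    ∀ w, w < k → (GF k R V ψ w ↔ GF k R' V' ψ w) := by
  intro ψ
  induction ψ with
  | var p => intro hV w hw; exact hV w p hw (self_mem_subf _)
  | bot => intro _ _ _; exact Iff.rfl
  | imp a b iha ihb =>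
    intro hV w hw
    have ha := iha (fun w p hw hp => hV w p hw (subf_imp_subset_left hp)) w hw
    have hb := ihb (fun w p hw hp => hV w p hw (subf_imp_subset_right hp)) w hw
    exact imp_congr ha hb
  | tri a b iha ihb =>
    intro hV w hw
    have ha := iha (fun w p hw hp => hV w p hw (subf_tri_subset_left hp))
    have hb := ihb (fun w p hw hp => hV w p hw (subf_tri_subset_right hp))
    constructor
    · intro h u v hu hv hR' hGa
      obtain ⟨v', hv', hRv, hGb⟩ := h u v hu hv ((hR w u v hw hu hv).mpr hR')
        ((ha u hu).mpr hGa)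
      exact ⟨v', hv', (hR w u v' hw hu hv').mp hRv, (hb v' hv').mp hGb⟩
    · intro h u v hu hv hR' hGa
      obtain ⟨v', hv', hRv, hGb⟩ := h u v hu hv ((hR w u v hw hu hv).mp hR')
        ((ha u hu).mp hGa)
      exact ⟨v', hv', (hR w u v' hw hu hv').mpr hRv, (hb v' hv').mpr hGb⟩

/-! ### encoding bounds -/

theorem add_le_pair (x y : ℕ) : x + y ≤ Nat.pair x y := by
  rw [Nat.pair]
  by_cases h : x < y
  · rw [if_pos h]
    have h1 : y ≤ y * y := Nat.le_mul_of_pos_left y (by omega)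
    calc x + y ≤ x + y * y := by exact Nat.add_le_add_left h1 x
      _ = y * y + x := by ring
  · rw [if_neg h]
    calc x + y ≤ x * x + (x + y) := Nat.le_add_left _ _
      _ = x * x + x + y := by ring

theorem enc_mono {ψ φ : Formula} (h : ψ ∈ subf φ) : enc ψ ≤ enc φ := by
  induction φ with
  | var n => rw [subf, Finset.mem_singleton] at h; subst h; rfl
  | bot => rw [subf, Finset.mem_singleton] at h; subst h; rfl
  | imp a b iha ihb =>
    rw [subf, Finset.mem_insert, Finset.mem_union] at h
    have hpa := Nat.left_le_pair (enc a) (enc b)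
    have hpb := Nat.right_le_pair (enc a) (enc b)
    rcases h with rfl | h | h
    · rfl
    · have := iha h; simp only [enc]; omega
    · have := ihb h; simp only [enc]; omega
  | tri a b iha ihb =>
    rw [subf, Finset.mem_insert, Finset.mem_union] at h
    have hpa := Nat.left_le_pair (enc a) (enc b)
    have hpb := Nat.right_le_pair (enc a) (enc b)
    rcases h with rfl | h | h
    · rfl
    · have := iha h; simp only [enc]; omega
    · have := ihb h; simp only [enc]; omega

theorem card_subf_le (φ : Formula) : (subf φ).card ≤ enc φ + 1 := by
  induction φ with
  | var n => rw [subf, Finset.card_singleton, enc]; omega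
  | bot => rw [subf, Finset.card_singleton, enc]; omega
  | imp a b iha ihb =>
    have h1 : (subf (imp a b)).card ≤ (subf a).card + (subf b).card + 1 := by
      rw [subf]
      calc (insert (imp a b) (subf a ∪ subf b)).card ≤ (subf a ∪ subf b).card + 1 :=
            Finset.card_insert_le _ _
        _ ≤ (subf a).card + (subf b).card + 1 := by
            have := Finset.card_union_le (subf a) (subf b); omega
    have h2 := add_le_pair (enc a) (enc b)
    simp only [enc]; omega
  | tri a b iha ihb =>
    have h1 : (subf (tri a b)).card ≤ (subf a).card + (subf b).card + 1 := by
      rw [subf]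
      calc (insert (tri a b) (subf a ∪ subf b)).card ≤ (subf a ∪ subf b).card + 1 :=
            Finset.card_insert_le _ _
        _ ≤ (subf a).card + (subf b).card + 1 := by
            have := Finset.card_union_le (subf a) (subf b); omega
    have h2 := add_le_pair (enc a) (enc b)
    simp only [enc]; omega

theorem card_clo_le (φ : Formula) : (clo φ).card ≤ 2 * enc φ + 4 := by
  have h1 : (insert bot (subf φ)).card ≤ enc φ + 2 := by
    have := Finset.card_insert_le bot (subf φ)
    have := card_subf_le φ
    omega
  have h2 : ((insert bot (subf φ)).image simNeg).card ≤ enc φ + 2 :=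
    le_trans (Finset.card_image_le) h1
  have := Finset.card_union_le (insert bot (subf φ)) ((insert bot (subf φ)).image simNeg)
  rw [clo]; omega

def KB (n : ℕ) : ℕ := 2^(2^(2*n+8))

theorem kC_le_KB (φ : Formula) : kC φ ≤ KB (enc φ) := by
  classical
  have hMC : (MC φ).card ≤ 2^(2 * enc φ + 4) := by
    have h1 : (MC φ) ⊆ (clo φ).powerset := fun s hs =>
      (Finset.mem_filter.mp (Finset.mem_filter.mp hs).1).1
    calc (MC φ).card ≤ (clo φ).powerset.card := Finset.card_le_card h1
      _ = 2^(clo φ).card := Finset.card_powerset _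
      _ ≤ 2^(2 * enc φ + 4) := Nat.pow_le_pow_right (by norm_num) (card_clo_le φ)
  have hk : kC φ = (MC φ).card * 2^(MC φ).card := by
    rw [kC, WL, Finset.length_toList, Finset.card_product, Finset.card_powerset]
  set m := (MC φ).card with hm
  have h2 : kC φ ≤ 2^(2*m) := by
    rw [hk, two_mul, pow_add]
    exact Nat.mul_le_mul_right _ (le_of_lt (Nat.lt_two_pow_self (n := m)))
  refine le_trans h2 ?_
  rw [KB]
  refine Nat.pow_le_pow_right (by norm_num) ?_
  have h3 : 2*m ≤ 2^(2*enc φ + 5) := by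
    have : m ≤ 2^(2*enc φ + 4) := hMC
    rw [pow_succ]
    omega
  refine le_trans h3 (Nat.pow_le_pow_right (by norm_num) (by omega))

/-! ### implementation of model checking by course-of-values recursion -/

/-- bounded existential: some possible output lands in the set coded by Fy -/
def anyI (q : (ℕ × ℕ) × List Bool) (m : ℕ) : Bool :=
  (List.range q.1.1).any fun v' =>
    bitB q.1.2 (m * q.1.1 + v') && q.2.getD v' false

/-- check of a single pair (w,u) -/
def allI (q : (ℕ × ℕ) × List Bool × List Bool) (wu : ℕ × ℕ) : Bool :=
  (List.range q.1.1).all fun v =>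
    (!(bitB q.1.2 ((wu.1 * q.1.1 + wu.2) * q.1.1 + v)) ||
      !(q.2.1.getD wu.2 false) ||
      anyI ((q.1.1, q.1.2), q.2.2) (wu.1 * q.1.1 + wu.2))

/-- semantics of ▷ at world w -/
def triCheck (q : (ℕ × ℕ) × List Bool × List Bool) (w : ℕ) : Bool :=
  (List.range q.1.1).all fun u => allI q (w, u)

def stepF (a : ℕ × ℕ × ℕ × ℕ) (tbl : List (List Bool)) : List Bool :=
  (List.range a.1).map fun w =>
    if tbl.length % 4 = 0 then bitB a.2.2.1 (w * a.2.2.2 + tbl.length / 4)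
    else if tbl.length % 4 = 1 then false
    else if tbl.length % 4 = 2 then
      (!(tbl.getD (tbl.length / 4).unpair.1 []).getD w false ||
        (tbl.getD (tbl.length / 4).unpair.2 []).getD w false)
    else triCheck ((a.1, a.2.1), (tbl.getD (tbl.length / 4).unpair.1 [],
      tbl.getD (tbl.length / 4).unpair.2 [])) w

def tabF (a : ℕ × ℕ × ℕ × ℕ) (n : ℕ) : List (List Bool) :=
  Nat.rec [] (fun _ T => T ++ [stepF a T]) n

def FF (a : ℕ × ℕ × ℕ × ℕ) (n : ℕ) : List Bool := stepF a (tabF a n)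

theorem tabF_length (a : ℕ × ℕ × ℕ × ℕ) (n : ℕ) : (tabF a n).length = n := by
  induction n with
  | zero => rfl
  | succ n ih =>
    show (tabF a n ++ [stepF a (tabF a n)]).length = n + 1
    rw [List.length_append, ih]; rfl

theorem getD_concat_length {β : Type} (l : List β) (x : β) (d : β) :
    (l ++ [x]).getD l.length d = x := by
  rw [List.getD_eq_getElem _ _ (by simp)]
  exact List.getElem_concat_length rfl _

theorem tabF_getD (a : ℕ × ℕ × ℕ × ℕ) {m n : ℕ} (h : m < n) :
    (tabF a n).getD m [] = FF a m := by
  induction n with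
  | zero => omega
  | succ n ih =>
    show (tabF a n ++ [stepF a (tabF a n)]).getD m [] = FF a m
    rcases Nat.lt_succ_iff_lt_or_eq.mp h with h' | h'
    · rw [List.getD_append _ _ _ _ (by rw [tabF_length]; exact h')]
      exact ih h'
    · subst h'
      have hl : (tabF a m).length = m := tabF_length a m
      calc (tabF a m ++ [stepF a (tabF a m)]).getD m []
          = (tabF a m ++ [stepF a (tabF a m)]).getD (tabF a m).length [] := by rw [hl]
        _ = stepF a (tabF a m) := getD_concat_length _ _ _
        _ = FF a m := rfl

theorem getD_map_range {β : Type} (f : ℕ → β) {w k : ℕ} (hw : w < k) (d : β) :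
    ((List.range k).map f).getD w d = f w := by
  rw [List.getD_eq_getElem _ _ (by simpa using hw)]
  simp

theorem FF_length (a : ℕ × ℕ × ℕ × ℕ) (n : ℕ) : (FF a n).length = a.1 := by
  simp [FF, stepF]

theorem FF_correct (k r vl P : ℕ) : ∀ (ψ : Formula) (w : ℕ), w < k →
    ((FF (k,r,vl,P) (enc ψ)).getD w false = true ↔ GF k (RB r k) (VB vl P) ψ w) := by
  intro ψ
  induction ψ with
  | var p =>
    intro w hw
    have h1 : enc (var p) % 4 = 0 := by rw [enc]; omega
    have h2 : enc (var p) / 4 = p := by rw [enc]; omega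
    have h0 : FF (k,r,vl,P) (enc (var p)) =
        (List.range k).map (fun w => bitB vl (w * P + p)) := by
      simp only [FF, stepF, tabF_length, h1, h2, if_pos, if_true]
    rw [h0, getD_map_range _ hw]
    exact Iff.rfl
  | bot =>
    intro w hw
    have h0 : FF (k,r,vl,P) (enc bot) = (List.range k).map (fun _ => false) := by
      simp only [FF, stepF, tabF_length, enc]
      norm_num
    rw [h0, getD_map_range _ hw]
    simp [GF]
  | imp a b iha ihb =>
    intro w hw
    have hpa := Nat.left_le_pair (enc a) (enc b)
    have hpb := Nat.right_le_pair (enc a) (enc b)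
    have h1 : enc (imp a b) % 4 = 2 := by rw [enc]; omega
    have h2 : enc (imp a b) / 4 = Nat.pair (enc a) (enc b) := by rw [enc]; omega
    have hlta : enc a < enc (imp a b) := by rw [enc]; omega
    have hltb : enc b < enc (imp a b) := by rw [enc]; omega
    have h0 : FF (k,r,vl,P) (enc (imp a b)) = (List.range k).map (fun w =>
        (!(FF (k,r,vl,P) (enc a)).getD w false ||
          (FF (k,r,vl,P) (enc b)).getD w false)) := by
      simp only [FF, stepF, tabF_length, h1, h2, Nat.unpair_pair,
        tabF_getD _ hlta, tabF_getD _ hltb]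
      norm_num
    rw [h0, getD_map_range _ hw]
    show _ ↔ (GF k (RB r k) (VB vl P) a w → GF k (RB r k) (VB vl P) b w)
    constructor
    · intro hor hga
      rcases Bool.or_eq_true_iff.mp hor with hfa | hfb
      · have hfa' : (FF (k,r,vl,P) (enc a)).getD w false = false := by simpa using hfa
        exact absurd (hfa'.symm.trans ((iha w hw).mpr hga)) (by simp)
      · exact (ihb w hw).mp hfb
    · intro him
      by_cases hga : GF k (RB r k) (VB vl P) a w
      · rw [(ihb w hw).mpr (him hga)]; simp
      · have : (FF (k,r,vl,P) (enc a)).getD w false = false := by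
          cases hval : (FF (k,r,vl,P) (enc a)).getD w false
          · rfl
          · exact absurd ((iha w hw).mp hval) hga
        rw [this]; simp
  | tri a b iha ihb =>
    intro w hw
    have hpa := Nat.left_le_pair (enc a) (enc b)
    have hpb := Nat.right_le_pair (enc a) (enc b)
    have h1 : enc (tri a b) % 4 = 3 := by rw [enc]; omega
    have h2 : enc (tri a b) / 4 = Nat.pair (enc a) (enc b) := by rw [enc]; omega
    have hlta : enc a < enc (tri a b) := by rw [enc]; omega
    have hltb : enc b < enc (tri a b) := by rw [enc]; omega
    have h0 : FF (k,r,vl,P) (enc (tri a b)) = (List.range k).map (fun w =>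
        (List.range k).all fun u => (List.range k).all fun v =>
          (!(bitB r ((w * k + u) * k + v)) ||
            !((FF (k,r,vl,P) (enc a)).getD u false) ||
            (List.range k).any fun v' =>
              bitB r ((w * k + u) * k + v') &&
                (FF (k,r,vl,P) (enc b)).getD v' false)) := by
      simp only [FF, stepF, triCheck, allI, anyI, tabF_length, h1, h2, Nat.unpair_pair,
        tabF_getD _ hlta, tabF_getD _ hltb]
      norm_num
    rw [h0, getD_map_range _ hw]
    rw [List.all_eq_true]
    show _ ↔ GF k (RB r k) (VB vl P) (tri a b) w
    constructor
    · intro hall u v hu hv hRuv hga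
      have h3 := hall u (List.mem_range.mpr hu)
      rw [List.all_eq_true] at h3
      have h4 := h3 v (List.mem_range.mpr hv)
      rcases Bool.or_eq_true_iff.mp h4 with h5 | h5
      · rcases Bool.or_eq_true_iff.mp h5 with h6 | h6
        · have h6' : bitB r ((w * k + u) * k + v) = false := by simpa using h6
          exact absurd (h6'.symm.trans hRuv) (by simp)
        · have h6' : (FF (k,r,vl,P) (enc a)).getD u false = false := by simpa using h6
          exact absurd (h6'.symm.trans ((iha u hu).mpr hga)) (by simp)
      · rw [List.any_eq_true] at h5
        obtain ⟨v', hv'mem, hv'⟩ := h5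
        obtain ⟨hbit, hgb⟩ := Bool.and_eq_true_iff.mp hv'
        exact ⟨v', List.mem_range.mp hv'mem, hbit, (ihb v' (List.mem_range.mp hv'mem)).mp hgb⟩
    · intro hGF u hu
      rw [List.all_eq_true]
      intro v hv
      rw [List.mem_range] at hu hv
      by_cases hbit : bitB r ((w * k + u) * k + v) = true
      · by_cases hga : GF k (RB r k) (VB vl P) a u
        · obtain ⟨v', hv', hRv', hgb⟩ := hGF u v hu hv hbit hga
          have : ((List.range k).any fun v' =>
              bitB r ((w * k + u) * k + v') &&
                (FF (k,r,vl,P) (enc b)).getD v' false) = true := by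
            rw [List.any_eq_true]
            exact ⟨v', List.mem_range.mpr hv',
              Bool.and_eq_true_iff.mpr ⟨hRv', (ihb v' hv').mpr hgb⟩⟩
          rw [this]; simp
        · have : (FF (k,r,vl,P) (enc a)).getD u false = false := by
            cases hval : (FF (k,r,vl,P) (enc a)).getD u false
            · rfl
            · exact absurd ((iha u hu).mp hval) hga
          rw [this]; simp
      · have : bitB r ((w * k + u) * k + v) = false := by
          cases hval : bitB r ((w * k + u) * k + v)
          · rfl
          · exact absurd hval hbit
        rw [this]; simp

/-! ### the decision procedure -/

def decR (n : ℕ) : Bool :=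
  (List.range (KB n + 1)).all fun k =>
    (List.range (2^(k*k*k))).all fun r =>
      (List.range (2^(k*(n+1)))).all fun vl =>
        (FF (k, r, vl, n+1) n).all id

theorem all_getD_iff {l : List Bool} :
    (∀ x ∈ l, id x = true) ↔ ∀ w, w < l.length → l.getD w false = true := by
  constructor
  · intro h w hw
    rw [List.getD_eq_getElem _ _ hw]
    exact h _ (List.getElem_mem hw)
  · intro h x hx
    rcases List.mem_iff_getElem.mp hx with ⟨i, hi, rfl⟩
    have := h i hi
    rw [List.getD_eq_getElem _ _ hi] at this
    exact this

theorem decR_true_iff (n : ℕ) : decR n = true ↔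
    ∀ k, k ≤ KB n → ∀ r, r < 2^(k*k*k) → ∀ vl, vl < 2^(k*(n+1)) →
      ∀ w, w < k → (FF (k,r,vl,n+1) n).getD w false = true := by
  rw [decR]
  simp only [List.all_eq_true, List.mem_range, Nat.lt_succ_iff]
  constructor
  · intro h k hk r hr vl hvl w hw
    have h2 := h k hk r hr vl hvl
    exact all_getD_iff.mp h2 w (by rw [FF_length]; exact hw)
  · intro h k hk r hr vl hvl
    refine all_getD_iff.mpr fun w hw => ?_
    rw [FF_length] at hw
    exact h k hk r hr vl hvl w hw

theorem decR_complete {φ : Formula} (h : Prv false φ) : decR (enc φ) = true := by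
  rw [decR_true_iff]
  intro k hk r hr vl hvl w hw
  exact (FF_correct k r vl (enc φ + 1) φ w hw).mpr
    (GF_sound h rfl k (RB r k) (VB vl (enc φ + 1)) w hw)

theorem dec_mod {x y k : ℕ} (hx : x < k) : (y * k + x) % k = x := by
  rw [add_comm, Nat.add_mul_mod_self_right, Nat.mod_eq_of_lt hx]

theorem dec_div {x y k : ℕ} (hx : x < k) : (y * k + x) / k = y := by
  rw [add_comm, Nat.add_mul_div_right _ _ (by omega : 0 < k),
    Nat.div_eq_of_lt hx, zero_add]

theorem idx_lt {w u v k : ℕ} (hw : w < k) (hu : u < k) (hv : v < k) :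
    (w * k + u) * k + v < k * k * k := by
  have h1 : w * k + u < k * k := by
    calc w * k + u < w * k + k := by omega
      _ = (w + 1) * k := by ring
      _ ≤ k * k := Nat.mul_le_mul_right k (by omega)
  calc (w * k + u) * k + v < (w * k + u) * k + k := by omega
    _ = (w * k + u + 1) * k := by ring
    _ ≤ (k * k) * k := Nat.mul_le_mul_right k (by omega)

theorem idx2_lt {w p k P : ℕ} (hw : w < k) (hp : p < P) : w * P + p < k * P := by
  calc w * P + p < w * P + P := by omega
    _ = (w + 1) * P := by ring
    _ ≤ k * P := Nat.mul_le_mul_right P (by omega)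

theorem decR_sound {φ : Formula} (h : decR (enc φ) = true) : Prv false φ := by
  classical
  by_contra hnp
  obtain ⟨i, hik, hnGF⟩ := counter_model φ hnp
  set n := enc φ with hn
  set k := kC φ with hkdef
  set rr := fromBits (fun e => decide (RC φ (e/k/k) (e/k%k) (e%k))) (k*k*k) with hrr
  set vv := fromBits (fun m => decide (VC φ (m/(n+1)) (m%(n+1)))) (k*(n+1)) with hvv
  have hR : ∀ w u v, w < k → u < k → v < k → (RC φ w u v ↔ RB rr k w u v) := by
    intro w u v hw hu hv
    rw [RB, hrr, bitB_fromBits _ (idx_lt hw hu hv)]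
    have e1 : ((w*k+u)*k+v) % k = v := dec_mod hv
    have e2 : ((w*k+u)*k+v) / k = w*k+u := dec_div hv
    have e3 : (w*k+u) % k = u := dec_mod hu
    have e4 : (w*k+u) / k = w := dec_div hu
    rw [e1, e2, e3, e4, decide_eq_true_iff]
  have hV : ∀ w p, w < k → var p ∈ subf φ → (VC φ w p ↔ VB vv (n+1) w p) := by
    intro w p hw hp
    have hpn : p < n + 1 := by
      have := enc_mono hp
      rw [enc] at this
      omega
    rw [VB, hvv, bitB_fromBits _ (idx2_lt hw hpn)]
    rw [dec_mod hpn, dec_div hpn, decide_eq_true_iff]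
  have hnGF' : ¬ GF k (RB rr k) (VB vv (n+1)) φ i := fun hg =>
    hnGF ((GF_congr hR φ hV i hik).mpr hg)
  have hfalse : (FF (k, rr, vv, n+1) n).getD i false ≠ true := fun ht =>
    hnGF' ((FF_correct k rr vv (n+1) φ i hik).mp ht)
  exact hfalse ((decR_true_iff n).mp h k (kC_le_KB φ) rr (fromBits_lt _ _)
    vv (fromBits_lt _ _) i hik)

/-! ### primitive recursiveness of the decision procedure -/

theorem list_all_eq_foldr {β : Type} (p : β → Bool) (l : List β) :
    l.all p = l.foldr (fun a r => p a && r) true := by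
  induction l with
  | nil => rfl
  | cons a l ih => simp [List.all_cons, ih]

theorem list_any_eq_foldr {β : Type} (p : β → Bool) (l : List β) :
    l.any p = l.foldr (fun a r => p a || r) false := by
  induction l with
  | nil => rfl
  | cons a l ih => simp [List.any_cons, ih]

theorem primrec_all {α β : Type} [Primcodable α] [Primcodable β]
    {f : α → List β} {p : α → β → Bool} (hf : Primrec f) (hp : Primrec₂ p) :
    Primrec fun a => (f a).all (p a) := by
  have hh : Primrec fun x : α × (β × Bool) => p x.1 x.2.1 && x.2.2 :=
    (Primrec.dom_bool₂ (· && ·)).comp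
      (hp.comp Primrec.fst (Primrec.fst.comp Primrec.snd))
      (Primrec.snd.comp Primrec.snd)
  exact (Primrec.list_foldr hf (Primrec.const true) hh.to₂).of_eq
    fun a => (list_all_eq_foldr (p a) (f a)).symm

theorem primrec_any {α β : Type} [Primcodable α] [Primcodable β]
    {f : α → List β} {p : α → β → Bool} (hf : Primrec f) (hp : Primrec₂ p) :
    Primrec fun a => (f a).any (p a) := by
  have hh : Primrec fun x : α × (β × Bool) => p x.1 x.2.1 || x.2.2 :=
    (Primrec.dom_bool₂ (· || ·)).comp
      (hp.comp Primrec.fst (Primrec.fst.comp Primrec.snd))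
      (Primrec.snd.comp Primrec.snd)
  exact (Primrec.list_foldr hf (Primrec.const false) hh.to₂).of_eq
    fun a => (list_any_eq_foldr (p a) (f a)).symm



theorem primrec_pow : Primrec₂ ((· ^ ·) : ℕ → ℕ → ℕ) :=
  Primrec₂.unpaired'.1 Nat.Primrec.pow

theorem primrec_bitB : Primrec₂ bitB := by
  have h1 : Primrec fun p : ℕ × ℕ => (2:ℕ)^p.2 :=
    primrec_pow.comp (Primrec.const 2) Primrec.snd
  have h2 : Primrec fun p : ℕ × ℕ => p.1 / 2^p.2 % 2 :=
    Primrec.nat_mod.comp (Primrec.nat_div.comp Primrec.fst h1) (Primrec.const 2)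
  exact (Primrec.eq.comp h2 (Primrec.const 1)).decide

set_option maxHeartbeats 2000000 in
theorem primrec_anyI : Primrec₂ anyI := by
  have hkZ : Primrec fun z : ((ℕ × ℕ) × List Bool) × ℕ => z.1.1.1 :=
    Primrec.fst.comp (Primrec.fst.comp Primrec.fst)
  have hk : Primrec fun y : (((ℕ × ℕ) × List Bool) × ℕ) × ℕ => y.1.1.1.1 :=
    hkZ.comp Primrec.fst
  have hr : Primrec fun y : (((ℕ × ℕ) × List Bool) × ℕ) × ℕ => y.1.1.1.2 :=
    Primrec.snd.comp (Primrec.fst.comp (Primrec.fst.comp Primrec.fst))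
  have hFy : Primrec fun y : (((ℕ × ℕ) × List Bool) × ℕ) × ℕ => y.1.1.2 :=
    Primrec.snd.comp (Primrec.fst.comp Primrec.fst)
  have hm : Primrec fun y : (((ℕ × ℕ) × List Bool) × ℕ) × ℕ => y.1.2 :=
    Primrec.snd.comp Primrec.fst
  have hv' : Primrec fun y : (((ℕ × ℕ) × List Bool) × ℕ) × ℕ => y.2 := Primrec.snd
  have hidx : Primrec fun y : (((ℕ × ℕ) × List Bool) × ℕ) × ℕ =>
      y.1.2 * y.1.1.1.1 + y.2 :=
    Primrec.nat_add.comp (Primrec.nat_mul.comp hm hk) hv'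
  have hbody : Primrec fun y : (((ℕ × ℕ) × List Bool) × ℕ) × ℕ =>
      bitB y.1.1.1.2 (y.1.2 * y.1.1.1.1 + y.2) && y.1.1.2.getD y.2 false :=
    (Primrec.dom_bool₂ (· && ·)).comp (primrec_bitB.comp hr hidx)
      ((Primrec.list_getD false).comp hFy hv')
  exact (primrec_any
    (f := fun z : ((ℕ × ℕ) × List Bool) × ℕ => List.range z.1.1.1)
    (p := fun z v' => bitB z.1.1.2 (z.2 * z.1.1.1 + v') && z.1.2.getD v' false)
    (Primrec.list_range.comp hkZ) hbody.to₂).of_eq fun z => rfl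

set_option maxHeartbeats 2000000 in
theorem primrec_allI : Primrec₂ allI := by
  have hkZ : Primrec fun z : ((ℕ × ℕ) × List Bool × List Bool) × (ℕ × ℕ) => z.1.1.1 :=
    Primrec.fst.comp (Primrec.fst.comp Primrec.fst)
  have hk : Primrec fun y : (((ℕ × ℕ) × List Bool × List Bool) × (ℕ × ℕ)) × ℕ =>
      y.1.1.1.1 := hkZ.comp Primrec.fst
  have hr : Primrec fun y : (((ℕ × ℕ) × List Bool × List Bool) × (ℕ × ℕ)) × ℕ =>
      y.1.1.1.2 := Primrec.snd.comp (Primrec.fst.comp (Primrec.fst.comp Primrec.fst))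
  have hFx : Primrec fun y : (((ℕ × ℕ) × List Bool × List Bool) × (ℕ × ℕ)) × ℕ =>
      y.1.1.2.1 := Primrec.fst.comp (Primrec.snd.comp (Primrec.fst.comp Primrec.fst))
  have hFy : Primrec fun y : (((ℕ × ℕ) × List Bool × List Bool) × (ℕ × ℕ)) × ℕ =>
      y.1.1.2.2 := Primrec.snd.comp (Primrec.snd.comp (Primrec.fst.comp Primrec.fst))
  have hw : Primrec fun y : (((ℕ × ℕ) × List Bool × List Bool) × (ℕ × ℕ)) × ℕ =>
      y.1.2.1 := Primrec.fst.comp (Primrec.snd.comp Primrec.fst)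
  have hu : Primrec fun y : (((ℕ × ℕ) × List Bool × List Bool) × (ℕ × ℕ)) × ℕ =>
      y.1.2.2 := Primrec.snd.comp (Primrec.snd.comp Primrec.fst)
  have hv : Primrec fun y : (((ℕ × ℕ) × List Bool × List Bool) × (ℕ × ℕ)) × ℕ =>
      y.2 := Primrec.snd
  have hbase : Primrec fun y : (((ℕ × ℕ) × List Bool × List Bool) × (ℕ × ℕ)) × ℕ =>
      y.1.2.1 * y.1.1.1.1 + y.1.2.2 :=
    Primrec.nat_add.comp (Primrec.nat_mul.comp hw hk) hu
  have hidx : Primrec fun y : (((ℕ × ℕ) × List Bool × List Bool) × (ℕ × ℕ)) × ℕ =>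
      (y.1.2.1 * y.1.1.1.1 + y.1.2.2) * y.1.1.1.1 + y.2 :=
    Primrec.nat_add.comp (Primrec.nat_mul.comp hbase hk) hv
  have t1 : Primrec fun y : (((ℕ × ℕ) × List Bool × List Bool) × (ℕ × ℕ)) × ℕ =>
      !(bitB y.1.1.1.2 ((y.1.2.1 * y.1.1.1.1 + y.1.2.2) * y.1.1.1.1 + y.2)) :=
    Primrec.not.comp (primrec_bitB.comp hr hidx)
  have t2 : Primrec fun y : (((ℕ × ℕ) × List Bool × List Bool) × (ℕ × ℕ)) × ℕ =>
      !(y.1.1.2.1.getD y.1.2.2 false) :=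
    Primrec.not.comp ((Primrec.list_getD false).comp hFx hu)
  have t3 : Primrec fun y : (((ℕ × ℕ) × List Bool × List Bool) × (ℕ × ℕ)) × ℕ =>
      anyI ((y.1.1.1.1, y.1.1.1.2), y.1.1.2.2) (y.1.2.1 * y.1.1.1.1 + y.1.2.2) :=
    primrec_anyI.comp ((hk.pair hr).pair hFy) hbase
  have hbody := (Primrec.dom_bool₂ (· || ·)).comp
    ((Primrec.dom_bool₂ (· || ·)).comp t1 t2) t3
  exact (primrec_all
    (f := fun z : ((ℕ × ℕ) × List Bool × List Bool) × (ℕ × ℕ) => List.range z.1.1.1)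
    (p := fun z v =>
      (!(bitB z.1.1.2 ((z.2.1 * z.1.1.1 + z.2.2) * z.1.1.1 + v)) ||
        !(z.1.2.1.getD z.2.2 false) ||
        anyI ((z.1.1.1, z.1.1.2), z.1.2.2) (z.2.1 * z.1.1.1 + z.2.2)))
    (Primrec.list_range.comp hkZ) hbody.to₂).of_eq fun z => rfl

set_option maxHeartbeats 2000000 in
theorem primrec_triCheck : Primrec₂ triCheck := by
  have hkZ : Primrec fun z : ((ℕ × ℕ) × List Bool × List Bool) × ℕ => z.1.1.1 :=
    Primrec.fst.comp (Primrec.fst.comp Primrec.fst)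
  have hq : Primrec fun y : (((ℕ × ℕ) × List Bool × List Bool) × ℕ) × ℕ => y.1.1 :=
    Primrec.fst.comp Primrec.fst
  have hw : Primrec fun y : (((ℕ × ℕ) × List Bool × List Bool) × ℕ) × ℕ => y.1.2 :=
    Primrec.snd.comp Primrec.fst
  have hbody : Primrec fun y : (((ℕ × ℕ) × List Bool × List Bool) × ℕ) × ℕ =>
      allI y.1.1 (y.1.2, y.2) := primrec_allI.comp hq (hw.pair Primrec.snd)
  exact (primrec_all
    (f := fun z : ((ℕ × ℕ) × List Bool × List Bool) × ℕ => List.range z.1.1.1)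
    (p := fun z u => allI z.1 (z.2, u))
    (Primrec.list_range.comp hkZ) hbody.to₂).of_eq fun z => rfl

set_option maxHeartbeats 2000000 in
theorem primrec_stepF : Primrec₂ stepF := by
  have hkX : Primrec fun x : (ℕ × ℕ × ℕ × ℕ) × List (List Bool) => x.1.1 :=
    Primrec.fst.comp Primrec.fst
  -- lifted projections on Y := X × ℕ
  have hk : Primrec fun y : ((ℕ × ℕ × ℕ × ℕ) × List (List Bool)) × ℕ => y.1.1.1 :=
    hkX.comp Primrec.fst
  have hr : Primrec fun y : ((ℕ × ℕ × ℕ × ℕ) × List (List Bool)) × ℕ => y.1.1.2.1 :=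
    Primrec.fst.comp (Primrec.snd.comp (Primrec.fst.comp Primrec.fst))
  have hvl : Primrec fun y : ((ℕ × ℕ × ℕ × ℕ) × List (List Bool)) × ℕ => y.1.1.2.2.1 :=
    Primrec.fst.comp (Primrec.snd.comp (Primrec.snd.comp (Primrec.fst.comp Primrec.fst)))
  have hP : Primrec fun y : ((ℕ × ℕ × ℕ × ℕ) × List (List Bool)) × ℕ => y.1.1.2.2.2 :=
    Primrec.snd.comp (Primrec.snd.comp (Primrec.snd.comp (Primrec.fst.comp Primrec.fst)))
  have htbl : Primrec fun y : ((ℕ × ℕ × ℕ × ℕ) × List (List Bool)) × ℕ => y.1.2 :=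
    Primrec.snd.comp Primrec.fst
  have hn : Primrec fun y : ((ℕ × ℕ × ℕ × ℕ) × List (List Bool)) × ℕ => y.1.2.length :=
    Primrec.list_length.comp htbl
  have hn4 : Primrec fun y : ((ℕ × ℕ × ℕ × ℕ) × List (List Bool)) × ℕ =>
      y.1.2.length % 4 := Primrec.nat_mod.comp hn (Primrec.const 4)
  have hq4 : Primrec fun y : ((ℕ × ℕ × ℕ × ℕ) × List (List Bool)) × ℕ =>
      y.1.2.length / 4 := Primrec.nat_div.comp hn (Primrec.const 4)
  have hFx : Primrec fun y : ((ℕ × ℕ × ℕ × ℕ) × List (List Bool)) × ℕ =>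
      y.1.2.getD (y.1.2.length / 4).unpair.1 [] :=
    (Primrec.list_getD ([] : List Bool)).comp htbl
      (Primrec.fst.comp (Primrec.unpair.comp hq4))
  have hFy : Primrec fun y : ((ℕ × ℕ × ℕ × ℕ) × List (List Bool)) × ℕ =>
      y.1.2.getD (y.1.2.length / 4).unpair.2 [] :=
    (Primrec.list_getD ([] : List Bool)).comp htbl
      (Primrec.snd.comp (Primrec.unpair.comp hq4))
  have hw : Primrec fun y : ((ℕ × ℕ × ℕ × ℕ) × List (List Bool)) × ℕ => y.2 :=
    Primrec.snd
  have c0 : PrimrecPred fun y : ((ℕ × ℕ × ℕ × ℕ) × List (List Bool)) × ℕ =>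
      y.1.2.length % 4 = 0 := Primrec.eq.comp hn4 (Primrec.const 0)
  have c1 : PrimrecPred fun y : ((ℕ × ℕ × ℕ × ℕ) × List (List Bool)) × ℕ =>
      y.1.2.length % 4 = 1 := Primrec.eq.comp hn4 (Primrec.const 1)
  have c2 : PrimrecPred fun y : ((ℕ × ℕ × ℕ × ℕ) × List (List Bool)) × ℕ =>
      y.1.2.length % 4 = 2 := Primrec.eq.comp hn4 (Primrec.const 2)
  have b0 : Primrec fun y : ((ℕ × ℕ × ℕ × ℕ) × List (List Bool)) × ℕ =>
      bitB y.1.1.2.2.1 (y.2 * y.1.1.2.2.2 + y.1.2.length / 4) :=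
    primrec_bitB.comp hvl (Primrec.nat_add.comp (Primrec.nat_mul.comp hw hP) hq4)
  have b2 : Primrec fun y : ((ℕ × ℕ × ℕ × ℕ) × List (List Bool)) × ℕ =>
      (!(y.1.2.getD (y.1.2.length / 4).unpair.1 []).getD y.2 false ||
        (y.1.2.getD (y.1.2.length / 4).unpair.2 []).getD y.2 false) :=
    (Primrec.dom_bool₂ (· || ·)).comp
      (Primrec.not.comp ((Primrec.list_getD false).comp hFx hw))
      ((Primrec.list_getD false).comp hFy hw)
  have b3 : Primrec fun y : ((ℕ × ℕ × ℕ × ℕ) × List (List Bool)) × ℕ =>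
      triCheck ((y.1.1.1, y.1.1.2.1), (y.1.2.getD (y.1.2.length / 4).unpair.1 [],
        y.1.2.getD (y.1.2.length / 4).unpair.2 [])) y.2 :=
    primrec_triCheck.comp ((hk.pair hr).pair (hFx.pair hFy)) hw
  have hbody := Primrec.ite c0 b0 (Primrec.ite c1 (Primrec.const false)
    (Primrec.ite c2 b2 b3))
  exact (Primrec.list_map (Primrec.list_range.comp hkX) hbody.to₂).of_eq fun x => rfl

set_option maxHeartbeats 2000000 in
theorem primrec_tabF : Primrec₂ tabF := by
  have hh : Primrec fun x : ((ℕ × ℕ × ℕ × ℕ) × ℕ) × (ℕ × List (List Bool)) =>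
      x.2.2 ++ [stepF x.1.1 x.2.2] :=
    Primrec.list_append.comp (Primrec.snd.comp Primrec.snd)
      (Primrec.list_cons.comp
        (primrec_stepF.comp (Primrec.fst.comp Primrec.fst)
          (Primrec.snd.comp Primrec.snd))
        (Primrec.const []))
  exact (Primrec.nat_rec' Primrec.snd (Primrec.const ([] : List (List Bool)))
    hh.to₂).of_eq fun a => rfl

theorem primrec_FF : Primrec₂ FF :=
  primrec_stepF.comp Primrec.fst primrec_tabF

set_option maxHeartbeats 2000000 in
theorem primrec_decR : Primrec decR := by
  -- innermost: γ3 := ((ℕ×ℕ)×ℕ)×ℕ  (((n,k),r),vl)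
  have hn3 : Primrec fun x : ((ℕ × ℕ) × ℕ) × ℕ => x.1.1.1 :=
    Primrec.fst.comp (Primrec.fst.comp Primrec.fst)
  have hk3 : Primrec fun x : ((ℕ × ℕ) × ℕ) × ℕ => x.1.1.2 :=
    Primrec.snd.comp (Primrec.fst.comp Primrec.fst)
  have hr3 : Primrec fun x : ((ℕ × ℕ) × ℕ) × ℕ => x.1.2 :=
    Primrec.snd.comp Primrec.fst
  have hvl3 : Primrec fun x : ((ℕ × ℕ) × ℕ) × ℕ => x.2 := Primrec.snd
  have hFFv : Primrec fun x : ((ℕ × ℕ) × ℕ) × ℕ =>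
      FF (x.1.1.2, x.1.2, x.2, x.1.1.1 + 1) x.1.1.1 :=
    primrec_FF.comp
      (hk3.pair (hr3.pair (hvl3.pair (Primrec.succ.comp hn3)))) hn3
  have hL3 : Primrec fun x : ((ℕ × ℕ) × ℕ) × ℕ =>
      (FF (x.1.1.2, x.1.2, x.2, x.1.1.1 + 1) x.1.1.1).all id :=
    primrec_all hFFv Primrec₂.right
  -- γ2 := (ℕ×ℕ)×ℕ  ((n,k),r)
  have hn2 : Primrec fun x : (ℕ × ℕ) × ℕ => x.1.1 := Primrec.fst.comp Primrec.fst
  have hk2 : Primrec fun x : (ℕ × ℕ) × ℕ => x.1.2 := Primrec.snd.comp Primrec.fst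
  have hb2 : Primrec fun x : (ℕ × ℕ) × ℕ => (2:ℕ)^(x.1.2 * (x.1.1 + 1)) :=
    primrec_pow.comp (Primrec.const 2)
      (Primrec.nat_mul.comp hk2 (Primrec.succ.comp hn2))
  have hL2 : Primrec fun x : (ℕ × ℕ) × ℕ =>
      (List.range (2^(x.1.2 * (x.1.1 + 1)))).all fun vl =>
        (FF (x.1.2, x.2, vl, x.1.1 + 1) x.1.1).all id :=
    primrec_all (Primrec.list_range.comp hb2) hL3.to₂
  -- γ1 := ℕ×ℕ  (n,k)
  have hn1 : Primrec fun x : ℕ × ℕ => x.1 := Primrec.fst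
  have hk1 : Primrec fun x : ℕ × ℕ => x.2 := Primrec.snd
  have hb1 : Primrec fun x : ℕ × ℕ => (2:ℕ)^(x.2 * x.2 * x.2) :=
    primrec_pow.comp (Primrec.const 2)
      (Primrec.nat_mul.comp (Primrec.nat_mul.comp hk1 hk1) hk1)
  have hL1 : Primrec fun x : ℕ × ℕ =>
      (List.range (2^(x.2 * x.2 * x.2))).all fun r =>
        (List.range (2^(x.2 * (x.1 + 1)))).all fun vl =>
          (FF (x.2, r, vl, x.1 + 1) x.1).all id :=
    primrec_all (Primrec.list_range.comp hb1) hL2.to₂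
  -- top level
  have hKB : Primrec fun n : ℕ => KB n + 1 :=
    Primrec.succ.comp (primrec_pow.comp (Primrec.const 2)
      (primrec_pow.comp (Primrec.const 2)
        (Primrec.nat_add.comp (Primrec.nat_mul.comp (Primrec.const 2) Primrec.id)
          (Primrec.const 8))))
  exact primrec_all (Primrec.list_range.comp hKB) hL1.to₂

end DecR

open Formula in
/-- Decidability of ℜ: there is a computable function (with respect to the
canonical encoding `Formula.enc` of formulas as natural numbers) deciding
theoremhood in ℜ. -/
theorem decidable_R :
    ∃ f : ℕ → Bool, Computable f ∧
      ∀ φ : Formula, (f (enc φ) = true ↔ Prv false φ) :=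
  ⟨DecR.decR, DecR.primrec_decR.to_comp,
    fun _ => ⟨DecR.decR_sound, DecR.decR_complete⟩⟩
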